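/- Let H be a p-ν-CA with structural period 1, right default rule f and left default rule g. If H is injective, then both the CA F with local rule f and the CA G with local rule g are surjective. -/

import Mathlib

set_option linter.unusedSectionVars false
set_option maxHeartbeats 1000000

variable {A : Type} [Fintype A] [Nonempty A]

def emb (a : A) (m : ℕ) (w : Fin m → A) : ℤ → A := fun i =>
  if h : 0 ≤ i ∧ i < (m:ℤ) then w ⟨i.toNat, by omega⟩ else a

lemma emb_out (a : A) (m : ℕ) (w : Fin m → A) (i : ℤ) (hi : i < 0 ∨ (m:ℤ) ≤ i) :
    emb a m w i = a := by
  unfold emb; rw [dif_neg]; omega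

lemma emb_in (a : A) (m : ℕ) (w : Fin m → A) (t : Fin m) :
    emb a m w (t : ℤ) = w t := by
  unfold emb
  rw [dif_pos ⟨Int.natCast_nonneg _, by exact_mod_cast t.2⟩]
  congr 1

lemma emb_inj (a : A) (m : ℕ) : Function.Injective (emb a m) := by
  intro w w' h
  funext t
  have := congrFun h (t : ℤ)
  rwa [emb_in, emb_in] at this

lemma emb_diff_finite (a : A) (m : ℕ) (w w' : Fin m → A) :
    {i : ℤ | emb a m w i ≠ emb a m w' i}.Finite := by
  apply Set.Finite.subset (Set.finite_Icc (0:ℤ) m)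
  intro i hi
  simp only [Set.mem_setOf_eq] at hi
  simp only [Set.mem_Icc]
  by_contra hc
  push_neg at hc
  rcases lt_or_ge i 0 with h0 | h0
  · exact hi (by rw [emb_out _ _ _ _ (Or.inl h0), emb_out _ _ _ _ (Or.inl h0)])
  · have := hc h0
    exact hi (by rw [emb_out _ _ _ _ (Or.inr this.le), emb_out _ _ _ _ (Or.inr this.le)])

lemma blk_lt {b L n j : ℕ} (hb : b < L) (hj : j < n) : b*n + j < L*n := by
  have h1 : (b+1)*n ≤ L*n := Nat.mul_le_mul_right n hb
  have h2 : (b+1)*n = b*n + n := by ring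
  omega

lemma shift_eq {r : ℕ} {f : (Fin (2*r+1) → A) → A} {F : (ℤ → A) → (ℤ → A)}
    (hF : ∀ (x : ℤ → A) (i : ℤ), F x i = f (fun j => x (i - (r:ℤ) + ((j:ℕ):ℤ))))
    (t : ℤ) (x : ℤ → A) (i : ℤ) :
    F (fun s => x (s + t)) i = F x (i + t) := by
  rw [hF, hF]
  congr 1
  funext j
  congr 1
  ring

lemma aux_pow (m : ℕ) : ∀ L : ℕ, m^(L+1) + (L+1) * m^L ≤ (m+1)^(L+1) := by
  intro L
  induction L with
  | zero => simp
  | succ L ih =>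
    have h2 : (m+1) * (m^(L+1) + (L+1) * m^L) ≤ (m+1) * (m+1)^(L+1) :=
      Nat.mul_le_mul_left _ ih
    show m^(L+2) + (L+2)*m^(L+1) ≤ (m+1)^(L+2)
    have h1 : (m+1)^(L+2) = (m+1) * (m+1)^(L+1) := by ring
    have e : (m+1) * (m^(L+1) + (L+1)*m^L)
        = m^(L+2) + (L+2)*m^(L+1) + (L+1)*m^L := by ring
    have h4 := Nat.zero_le ((L+1)*m^L)
    omega

lemma aux_count (Q c : ℕ) (hQ : 2 ≤ Q) (hc : 1 ≤ c) :
    ¬ (Q ^ ((Q-1)*c) ≤ (Q-1)^((Q-1)*c) * c) := by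
  intro hle
  obtain ⟨m, rfl⟩ : ∃ m, Q = m + 1 + 1 := ⟨Q - 2, by omega⟩
  have hs : (m + 1 + 1) - 1 = m + 1 := by omega
  rw [hs] at hle
  have hpos : 1 ≤ (m+1)*c := Nat.mul_pos (by omega) hc
  obtain ⟨L', hL'⟩ : ∃ L', (m+1)*c = L' + 1 := ⟨(m+1)*c - 1, by omega⟩
  rw [hL'] at hle
  have h1 := aux_pow (m+1) L'
  have h2 : (L'+1) * (m+1)^L' = c * (m+1)^(L'+1) := by
    rw [pow_succ, ← hL']; ring
  have h3 : 0 < (m+1)^(L'+1) := pow_pos (by omega) _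
  have h4 : (m+1)^(L'+1) * c = c * (m+1)^(L'+1) := by ring
  omega

lemma window_of_preinj {r : ℕ} {f : (Fin (2*r+1) → A) → A} {F : (ℤ → A) → (ℤ → A)}
    (hF : ∀ (x : ℤ → A) (i : ℤ), F x i = f (fun j => x (i - (r:ℤ) + ((j:ℕ):ℤ))))
    (hpre : ∀ x y : ℤ → A, {i | x i ≠ y i}.Finite → F x = F y → x = y)
    (n : ℕ) (z : ℤ → A) : ∃ x : ℤ → A, ∀ i : ℤ, 0 ≤ i → i < (n:ℤ) → F x i = z i := by
  classical
  by_contra hbad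
  push_neg at hbad
  obtain ⟨a⟩ := ‹Nonempty A›
  rcases subsingleton_or_nontrivial A with hA | hA
  · obtain ⟨i, _, _, hne⟩ := hbad (fun _ => a)
    exact hne (Subsingleton.elim _ _)
  have hn : 0 < n := by
    obtain ⟨i, h0, h1, _⟩ := hbad (fun _ => a)
    omega
  set q := Fintype.card A with hqdef
  have hq2 : 2 ≤ q := Fintype.one_lt_card
  set Q := q ^ n with hQdef
  set c := q ^ (2*r) with hcdef
  have hQ2 : 2 ≤ Q := by
    calc 2 = 2^1 := rfl
    _ ≤ q^n := Nat.pow_le_pow_left hq2 n |>.trans' (by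
        exact Nat.pow_le_pow_right (by omega) hn)
    _ = Q := rfl
  have hc1 : 1 ≤ c := Nat.one_le_pow _ _ (by omega)
  set L := (Q - 1) * c with hLdef
  set m := L * n + 2*r with hmdef
  set N := L * n + 4*r with hNdef
  -- the fingerprint map
  set Ψ : (Fin m → A) → (Fin N → A) :=
    (fun w t => F (emb a m w) ((t:ℤ) - (r:ℤ))) with hΨdef
  have hNm : (N:ℤ) = (m:ℤ) + 2*(r:ℤ) := by rw [hNdef, hmdef]; push_cast; ring
  have hout : ∀ (w : Fin m → A) (i : ℤ), i < -(r:ℤ) ∨ (m:ℤ) + (r:ℤ) ≤ i →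
      F (emb a m w) i = f (fun _ => a) := by
    intro w i hi
    rw [hF]
    congr 1
    funext j
    apply emb_out
    have hj : ((j:ℕ):ℤ) < 2*(r:ℤ) + 1 := by exact_mod_cast j.2
    have hj0 : (0:ℤ) ≤ ((j:ℕ):ℤ) := Int.natCast_nonneg _
    rcases hi with h | h
    · left; omega
    · right; omega
  have hΨinj : Function.Injective Ψ := by
    intro w w' hww
    apply emb_inj a m
    apply hpre _ _ (emb_diff_finite a m w w')
    funext i
    rcases le_or_gt 0 (i + (r:ℤ)) with h0 | h0
    · rcases lt_or_ge (i + (r:ℤ)) (N:ℤ) with h1 | h1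
      · have ht : (i + (r:ℤ)).toNat < N := by omega
        have h2 := congrFun hww ⟨(i+(r:ℤ)).toNat, ht⟩
        have h2' : F (emb a m w) (((((i+(r:ℤ)).toNat : ℕ)):ℤ) - (r:ℤ))
            = F (emb a m w') (((((i+(r:ℤ)).toNat : ℕ)):ℤ) - (r:ℤ)) := h2
        rw [show ((((i+(r:ℤ)).toNat : ℕ)):ℤ) - (r:ℤ) = i by omega] at h2'
        exact h2'
      · rw [hout w i (Or.inr (by omega)), hout w' i (Or.inr (by omega))]
    · rw [hout w i (Or.inl (by omega)), hout w' i (Or.inl (by omega))]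
  -- blocks avoid the bad word z
  set zfin : Fin n → A := (fun j => z ((j:ℕ):ℤ)) with hzdef
  have hblk : ∀ (w : Fin m → A) (b : Fin L),
      (fun j : Fin n => Ψ w ⟨(b:ℕ)*n + 2*r + (j:ℕ),
        by have := blk_lt b.2 j.2; omega⟩) ≠ zfin := by
    intro w b hcon
    obtain ⟨i, h0, h1, hne⟩ :=
      hbad (fun s => emb a m w (s + ((((b:ℕ)*n : ℕ)):ℤ) + (r:ℤ)))
    apply hne
    have hsh := shift_eq hF (((((b:ℕ)*n : ℕ)):ℤ) + (r:ℤ)) (emb a m w) i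
    have hsh' : F (fun s => emb a m w (s + ((((b:ℕ)*n : ℕ)):ℤ) + (r:ℤ))) i
        = F (emb a m w) (i + (((((b:ℕ)*n : ℕ)):ℤ) + (r:ℤ))) := by
      rw [← hsh]
      congr 1
      funext s
      congr 1
      ring
    rw [hsh']
    have hti : i.toNat < n := by omega
    have h2 := congrFun hcon ⟨i.toNat, hti⟩
    rw [hΨdef] at h2
    simp only [hzdef] at h2
    have e1 : ((((b:ℕ)*n + 2*r + i.toNat : ℕ)):ℤ) - (r:ℤ)
        = i + (((((b:ℕ)*n : ℕ)):ℤ) + (r:ℤ)) := by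
      push_cast
      omega
    have e2 : ((i.toNat : ℕ):ℤ) = i := by omega
    rw [e1, e2] at h2
    exact h2
  -- the encoding map
  set Φ : (Fin m → A) → (Fin L → {u : Fin n → A // u ≠ zfin}) × (Fin (2*r) → A) × (Fin (2*r) → A) :=
    (fun w => (fun b => ⟨fun j => Ψ w ⟨(b:ℕ)*n + 2*r + (j:ℕ),
                  by have := blk_lt b.2 j.2; omega⟩, hblk w b⟩,
               fun s => Ψ w ⟨(s:ℕ), by have := s.2; omega⟩,
               fun s => Ψ w ⟨L*n + 2*r + (s:ℕ), by have := s.2; omega⟩)) with hΦdef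
  have hΦinj : Function.Injective Φ := by
    intro w w' hww
    apply hΨinj
    funext t
    have h1 : ∀ (b : Fin L) (j : Fin n),
        Ψ w ⟨(b:ℕ)*n + 2*r + (j:ℕ), by have := blk_lt b.2 j.2; omega⟩
        = Ψ w' ⟨(b:ℕ)*n + 2*r + (j:ℕ), by have := blk_lt b.2 j.2; omega⟩ := by
      intro b j
      have := congrFun (congrArg Prod.fst hww) b
      rw [hΦdef] at this
      exact congrFun (congrArg Subtype.val this) j
    have h2 : ∀ (s : Fin (2*r)), Ψ w ⟨(s:ℕ), by have := s.2; omega⟩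
        = Ψ w' ⟨(s:ℕ), by have := s.2; omega⟩ := by
      intro s
      have := congrFun (congrArg (fun p => p.2.1) hww) s
      rw [hΦdef] at this
      exact this
    have h3 : ∀ (s : Fin (2*r)), Ψ w ⟨L*n + 2*r + (s:ℕ), by have := s.2; omega⟩
        = Ψ w' ⟨L*n + 2*r + (s:ℕ), by have := s.2; omega⟩ := by
      intro s
      have := congrFun (congrArg (fun p => p.2.2) hww) s
      rw [hΦdef] at this
      exact this
    have htN : (t:ℕ) < L*n + 4*r := by have := t.2; omega
    rcases lt_or_ge (t:ℕ) (2*r) with hc1' | hc1'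
    · exact h2 ⟨(t:ℕ), hc1'⟩
    rcases lt_or_ge (t:ℕ) (L*n + 2*r) with hc2 | hc2
    · set D := ((t:ℕ) - 2*r)/n with hD
      set M := ((t:ℕ) - 2*r)%n with hM
      have hDb : D < L := by
        rw [hD]
        rw [Nat.div_lt_iff_lt_mul hn]
        omega
      have hMb : M < n := Nat.mod_lt _ hn
      have he : D * n + M = (t:ℕ) - 2*r := by
        rw [hD, hM]; exact Nat.div_add_mod' _ _
      have hh := h1 ⟨D, hDb⟩ ⟨M, hMb⟩
      have hidx : D*n + 2*r + M = (t:ℕ) := by omega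
      have e : t = (⟨D*n + 2*r + M, by have := blk_lt hDb hMb; omega⟩ : Fin N) :=
        Fin.ext hidx.symm
      rw [e]
      exact hh
    · have hs : (t:ℕ) - (L*n + 2*r) < 2*r := by omega
      have hh := h3 ⟨(t:ℕ) - (L*n + 2*r), hs⟩
      have hidx : L*n + 2*r + ((t:ℕ) - (L*n + 2*r)) = (t:ℕ) := by omega
      have e : t = (⟨L*n + 2*r + ((t:ℕ) - (L*n + 2*r)), by omega⟩ : Fin N) :=
        Fin.ext hidx.symm
      rw [e]
      exact hh
  -- cardinality contradiction
  have hcard := Fintype.card_le_of_injective Φ hΦinj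
  have hc_dom : Fintype.card (Fin m → A) = q ^ m := by
    simp [hqdef]
  have hc_sub : Fintype.card {u : Fin n → A // u ≠ zfin} = q^n - 1 := by
    rw [Fintype.card_subtype_compl]
    simp [hqdef]
  have hc_cod : Fintype.card ((Fin L → {u : Fin n → A // u ≠ zfin}) × (Fin (2*r) → A) × (Fin (2*r) → A))
      = (q^n - 1)^L * (q^(2*r) * q^(2*r)) := by
    simp [hc_sub, hqdef]
  rw [hc_dom, hc_cod] at hcard
  have hsplit : q ^ m = Q^L * q^(2*r) := by
    rw [hmdef, hQdef, pow_add, ← pow_mul, Nat.mul_comm n L]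
  rw [hsplit] at hcard
  have hfin : Q^L ≤ (Q-1)^L * c := by
    have hpos : 0 < q^(2*r) := Nat.pow_pos (by omega)
    have : Q^L * q^(2*r) ≤ ((Q-1)^L * c) * q^(2*r) := by
      calc Q^L * q^(2*r) ≤ (q^n-1)^L * (q^(2*r) * q^(2*r)) := hcard
      _ = ((Q-1)^L * c) * q^(2*r) := by rw [hQdef, hcdef]; ring
    exact Nat.le_of_mul_le_mul_right this hpos
  exact aux_count Q c hQ2 hc1 hfin

lemma surj_of_window {r : ℕ} {f : (Fin (2*r+1) → A) → A} {F : (ℤ → A) → (ℤ → A)}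
    (hF : ∀ (x : ℤ → A) (i : ℤ), F x i = f (fun j => x (i - (r:ℤ) + ((j:ℕ):ℤ))))
    (hwin : ∀ (n : ℕ) (z : ℤ → A), ∃ x : ℤ → A, ∀ i : ℤ, 0 ≤ i → i < (n:ℤ) → F x i = z i) :
    Function.Surjective F := by
  classical
  intro y
  have happ : ∀ n : ℕ, ∃ x : ℤ → A, ∀ i : ℤ, -(n:ℤ) ≤ i → i ≤ (n:ℤ) → F x i = y i := by
    intro n
    obtain ⟨x0, hx0⟩ := hwin (2*n+1) (fun i => y (i - n))
    refine ⟨fun s => x0 (s + (n:ℤ)), ?_⟩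
    intro i hi1 hi2
    rw [shift_eq hF (n:ℤ) x0 i, hx0 (i + n) (by omega) (by push_cast; omega)]
    congr 1
    omega
  choose X hX using happ
  set U : Ultrafilter ℕ := Ultrafilter.of (Filter.cofinite : Filter ℕ) with hUdef
  have hU : ↑U ≤ (Filter.cofinite : Filter ℕ) := Ultrafilter.of_le _
  have hsel : ∀ s : ℕ → A, ∃ a : A, {n | s n = a} ∈ U := by
    intro s
    by_contra hc
    push_neg at hc
    have h1 : ∀ a : A, {n | s n = a}ᶜ ∈ U := fun a =>
      (Ultrafilter.compl_mem_iff_notMem).2 (hc a)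
    have h2 : (⋂ a : A, {n | s n = a}ᶜ) ∈ U := (Filter.iInter_mem).2 h1
    obtain ⟨n, hn⟩ := Filter.nonempty_of_mem h2
    simp only [Set.mem_iInter, Set.mem_compl_iff, Set.mem_setOf_eq] at hn
    exact hn (s n) rfl
  choose val hval using fun i : ℤ => hsel (fun n => X n i)
  refine ⟨val, ?_⟩
  funext i
  have hS1 : (⋂ j : Fin (2*r+1), {n : ℕ | X n (i - (r:ℤ) + ((j:ℕ):ℤ)) = val (i - (r:ℤ) + ((j:ℕ):ℤ))}) ∈ U :=
    (Filter.iInter_mem).2 (fun j => hval _)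
  have hS2 : {n : ℕ | i.natAbs ≤ n} ∈ U := by
    apply hU
    rw [Filter.mem_cofinite]
    have he : {n : ℕ | i.natAbs ≤ n}ᶜ = {n | n < i.natAbs} := by
      ext n; simp [not_le]
    rw [he]
    exact Set.finite_lt_nat _
  obtain ⟨n, hn1, hn2⟩ := Filter.nonempty_of_mem (Filter.inter_mem hS1 hS2)
  have hn2' : i.natAbs ≤ n := hn2
  rw [hF]
  have he : (fun j : Fin (2*r+1) => val (i - (r:ℤ) + ((j:ℕ):ℤ)))
      = (fun j : Fin (2*r+1) => X n (i - (r:ℤ) + ((j:ℕ):ℤ))) := by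
    funext j
    exact (Set.mem_iInter.1 hn1 j).symm
  rw [he, ← hF]
  exact hX n i (by omega) (by omega)


/-- For a p-ν-CA `H` with structural period 1, right default rule `f` and left default
rule `g` (all rules of radius `r`, `h_i = f` for `i > k`, `h_i = g` for `i < -k`):
if `H` is injective then both CA `F` (rule `f`) and `G` (rule `g`) are surjective. -/
theorem stmt_9 {A : Type} [Fintype A] [Nonempty A]
    (r k : ℕ)
    (h : ℤ → (Fin (2 * r + 1) → A) → A)
    (f g : (Fin (2 * r + 1) → A) → A)
    (hf : ∀ i : ℤ, (k : ℤ) < i → h i = f)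
    (hg : ∀ i : ℤ, i < -(k : ℤ) → h i = g)
    (H F G : (ℤ → A) → (ℤ → A))
    (hH : ∀ (x : ℤ → A) (i : ℤ),
      H x i = h i (fun j => x (i - (r : ℤ) + ((j : ℕ) : ℤ))))
    (hF : ∀ (x : ℤ → A) (i : ℤ),
      F x i = f (fun j => x (i - (r : ℤ) + ((j : ℕ) : ℤ))))
    (hG : ∀ (x : ℤ → A) (i : ℤ),
      G x i = g (fun j => x (i - (r : ℤ) + ((j : ℕ) : ℤ)))) :
    Function.Injective H → Function.Surjective F ∧ Function.Surjective G := by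
  intro hinj
  have hpreF : ∀ x y : ℤ → A, {i | x i ≠ y i}.Finite → F x = F y → x = y := by
    intro x y hfin hFxy
    set N : ℕ := hfin.toFinset.sup Int.natAbs with hN
    have hbound : ∀ i : ℤ, x i ≠ y i → i.natAbs ≤ N := by
      intro i hi
      exact Finset.le_sup (by rw [Set.Finite.mem_toFinset]; exact hi)
    set t : ℤ := (N:ℤ) + (k:ℤ) + 2*(r:ℤ) + 1 with ht
    have key : H (fun s => x (s - t)) = H (fun s => y (s - t)) := by
      funext i
      rcases le_or_gt i (k:ℤ) with hik | hik
      · rw [hH, hH]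
        congr 1
        funext j
        by_contra hne
        have hb := hbound _ hne
        have hj : ((j:ℕ):ℤ) < 2*(r:ℤ)+1 := by exact_mod_cast j.2
        have hj0 : (0:ℤ) ≤ ((j:ℕ):ℤ) := Int.natCast_nonneg _
        omega
      · rw [hH, hH, hf i hik]
        have e1 : ∀ u : ℤ → A, (f fun j => u (i - (r:ℤ) + ((j:ℕ):ℤ) - t)) = F u (i + -t) := by
          intro u
          rw [hF]
          congr 1
          funext j
          congr 1
          ring
        rw [e1, e1, hFxy]
    have hxy := hinj key
    funext i
    have h2 := congrFun hxy (i + t)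
    simpa using h2
  have hpreG : ∀ x y : ℤ → A, {i | x i ≠ y i}.Finite → G x = G y → x = y := by
    intro x y hfin hGxy
    set N : ℕ := hfin.toFinset.sup Int.natAbs with hN
    have hbound : ∀ i : ℤ, x i ≠ y i → i.natAbs ≤ N := by
      intro i hi
      exact Finset.le_sup (by rw [Set.Finite.mem_toFinset]; exact hi)
    set t : ℤ := -((N:ℤ) + (k:ℤ) + 2*(r:ℤ) + 1) with ht
    have key : H (fun s => x (s - t)) = H (fun s => y (s - t)) := by
      funext i
      rcases le_or_gt (-(k:ℤ)) i with hik | hik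
      · rw [hH, hH]
        congr 1
        funext j
        by_contra hne
        have hb := hbound _ hne
        have hj : ((j:ℕ):ℤ) < 2*(r:ℤ)+1 := by exact_mod_cast j.2
        have hj0 : (0:ℤ) ≤ ((j:ℕ):ℤ) := Int.natCast_nonneg _
        omega
      · rw [hH, hH, hg i hik]
        have e1 : ∀ u : ℤ → A, (g fun j => u (i - (r:ℤ) + ((j:ℕ):ℤ) - t)) = G u (i + -t) := by
          intro u
          rw [hG]
          congr 1
          funext j
          congr 1
          ring
        rw [e1, e1, hGxy]
    have hxy := hinj key
    funext i
    have h2 := congrFun hxy (i + t)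
    simpa using h2
  exact ⟨surj_of_window hF (window_of_preinj hF hpreF),
         surj_of_window hG (window_of_preinj hG hpreG)⟩
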